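/- arXiv:2201.07553 — 4 statements merged into one kernel-verified Lean document; each statement's English description precedes it below -/
import Mathlib

section
/- Let G be a group of order n and let D be an (n, mk, λ)-difference set in G that is partitioned by a collection S' = {D₁, …, D_m} of m pairwise disjoint k-subsets. Then S' is an (n, m, k, μ)-disjoint difference family if and only if S' is an (n, m, k, λ−μ)-external difference family. -/
open Finset

section Defs

variable {G : Type*} [AddGroup G] [DecidableEq G]

/-- The multiset of internal differences `x - y` (`x ≠ y`) of a finset. -/
def intDiff (D : Finset G) : Multiset G :=
  ((D ×ˢ D).filter fun p => p.1 ≠ p.2).val.map fun p => p.1 - p.2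

/-- The multiset of external differences `x - y`, `x ∈ D₁`, `y ∈ D₂`. -/
def extDiff (D₁ D₂ : Finset G) : Multiset G :=
  (D₁ ×ˢ D₂).val.map fun p => p.1 - p.2

variable {ι : Type*} [Fintype ι] [DecidableEq ι]

/-- The multiset of all internal differences of a family of sets. -/
def famInt (D : ι → Finset G) : Multiset G := ∑ i, intDiff (D i)

/-- The multiset of all external differences between distinct members of a family of sets. -/
def famExt (D : ι → Finset G) : Multiset G :=
  ∑ i, ∑ j, if j = i then 0 else extDiff (D i) (D j)

/-- The union of the members of a family of sets. -/
def famU (D : ι → Finset G) : Finset G := Finset.univ.biUnion D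

variable [Fintype G]

/-- `D` is an `(n,k,λ)`-difference set: `Δ(D) = λ(G*)`. -/
def IsDS (n k : ℕ) (lam : ℤ) (D : Finset G) : Prop :=
  Fintype.card G = n ∧ D.card = k ∧
    ∀ x : G, ((intDiff D).count x : ℤ) = if x = 0 then 0 else lam

/-- `P` is an `(n,k,λ,μ)`-partial difference set: `Δ(P) = λ(P) + μ(G* \ P)`. -/
def IsPDS (n k : ℕ) (lam mu : ℤ) (P : Finset G) : Prop :=
  Fintype.card G = n ∧ P.card = k ∧
    ∀ x : G, ((intDiff P).count x : ℤ) =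
      if x ∈ P then lam else if x = 0 then 0 else mu

/-- `D` is a family of `m` pairwise disjoint `k`-subsets of a group of order `n`. -/
def FamShape (n m k : ℕ) (D : ι → Finset G) : Prop :=
  Fintype.card G = n ∧ Fintype.card ι = m ∧ (∀ i, (D i).card = k) ∧
    ∀ i j, i ≠ j → Disjoint (D i) (D j)

/-- `(n,m,k,λ)`-disjoint difference family: `⋃ᵢ Δ(Dᵢ) = λ(G*)`. -/
def IsDDF (n m k : ℕ) (lam : ℤ) (D : ι → Finset G) : Prop :=
  FamShape n m k D ∧
    ∀ x : G, ((famInt D).count x : ℤ) = if x = 0 then 0 else lam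

/-- `(n,m,k,λ)`-external difference family: `⋃_{i≠j} Δ(Dᵢ,Dⱼ) = λ(G*)`. -/
def IsEDF (n m k : ℕ) (lam : ℤ) (D : ι → Finset G) : Prop :=
  FamShape n m k D ∧
    ∀ x : G, ((famExt D).count x : ℤ) = if x = 0 then 0 else lam

/-- `(n,m,k,λ,μ)`-disjoint partial difference family:
sets in `G*`, `⋃ᵢ Δ(Dᵢ) = λ(S) + μ(G* \ S)` where `S = ⋃ᵢ Dᵢ`. -/
def IsDPDF (n m k : ℕ) (lam mu : ℤ) (D : ι → Finset G) : Prop :=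
  FamShape n m k D ∧ (∀ i, (0 : G) ∉ D i) ∧
    ∀ x : G, ((famInt D).count x : ℤ) =
      if x ∈ famU D then lam else if x = 0 then 0 else mu

/-- `(n,m,k,λ,μ)`-external partial difference family:
sets in `G*`, `⋃_{i≠j} Δ(Dᵢ,Dⱼ) = λ(S) + μ(G* \ S)` where `S = ⋃ᵢ Dᵢ`. -/
def IsEPDF (n m k : ℕ) (lam mu : ℤ) (D : ι → Finset G) : Prop :=
  FamShape n m k D ∧ (∀ i, (0 : G) ∉ D i) ∧
    ∀ x : G, ((famExt D).count x : ℤ) =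
      if x ∈ famU D then lam else if x = 0 then 0 else mu

end Defs

section FieldDefs

variable {F : Type*} [Field F] [DecidableEq F]

/-- `α` is a primitive element: every nonzero element is a power of `α`. -/
def IsPrimitiveElt (α : F) : Prop := ∀ x : F, x ≠ 0 → ∃ k : ℕ, x = α ^ k

/-- The coset `α^i⟨α^e⟩` of the cyclotomic class of order `e` (of size `f`). -/
def cyclo (α : F) (e f i : ℕ) : Finset F :=
  (Finset.range f).image fun j => α ^ (i + e * j)

/-- The cyclotomic number `(i,j)_e`: the number of pairs `(zᵢ, zⱼ) ∈ Cᵢ × Cⱼ` with `zᵢ + 1 = zⱼ`. -/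
def cycNum (α : F) (e f i j : ℕ) : ℕ :=
  ((cyclo α e f i ×ˢ cyclo α e f j).filter fun p => p.1 + 1 = p.2).card

/-- `Φᵢ = {x ∈ C₀^e : x ≠ 1, x - 1 ∈ α^i C₀^ε}`. -/
def Phi (α : F) (e f ε ρ i : ℕ) : Finset F :=
  (cyclo α e f 0).filter fun x => x ≠ 1 ∧ x - 1 ∈ cyclo α ε ρ i

/-- `φᵢ = |Φᵢ|`. -/
def phi (α : F) (e f ε ρ i : ℕ) : ℕ := (Phi α e f ε ρ i).card

end FieldDefs


lemma sum_sprod {α β : Type*} {s : Finset α} (f : α → Multiset β) (t : Multiset β) :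
    (∑ i ∈ s, f i) ×ˢ t = ∑ i ∈ s, f i ×ˢ t := by
  induction s using Finset.cons_induction with
  | empty => simp [Multiset.zero_product]
  | cons a s ha ih => simp [Multiset.add_product, ih]

lemma sprod_sum {α β : Type*} {s : Finset α} (f : α → Multiset β) (t : Multiset β) :
    t ×ˢ (∑ i ∈ s, f i) = ∑ i ∈ s, t ×ˢ f i := by
  induction s using Finset.cons_induction with
  | empty => simp [Multiset.product_zero]
  | cons a s ha ih => simp [Multiset.product_add, ih]

lemma mf_sum {α β γ : Type*} {s : Finset α} (g : α → Multiset β) (p : β → Prop)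
    [DecidablePred p] (f : β → γ) :
    ((∑ i ∈ s, g i).filter p).map f = ∑ i ∈ s, ((g i).filter p).map f := by
  induction s using Finset.cons_induction with
  | empty => simp
  | cons a s ha ih => simp [Multiset.filter_add, Multiset.map_add, ih]

lemma intDiff_famU {G : Type*} [AddGroup G] [DecidableEq G] {ι : Type*} [Fintype ι]
    [DecidableEq ι] (D : ι → Finset G) (hdisj : ∀ i j, i ≠ j → Disjoint (D i) (D j)) :
    intDiff (famU D) = famInt D + famExt D := by
  have hval : (famU D).val = ∑ i, (D i).val := by
    rw [famU, ← Finset.disjiUnion_eq_biUnion _ _ (show (↑(univ : Finset ι) : Set ι).PairwiseDisjoint D from fun i _ j _ h => hdisj i j h),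
      Finset.disjiUnion_val, Finset.sum, Multiset.bind, Multiset.join]
  rw [intDiff, Finset.filter_val, Finset.product_val, hval, sum_sprod, mf_sum]
  have hterm : ∀ i : ι, (((D i).val ×ˢ ∑ j, (D j).val).filter (fun p => p.1 ≠ p.2)).map
      (fun p : G × G => p.1 - p.2)
      = intDiff (D i) + ∑ j, if j = i then 0 else extDiff (D i) (D j) := by
    intro i
    rw [sprod_sum, mf_sum]
    have h2 : ∀ j : ι, (((D i).val ×ˢ (D j).val).filter (fun p => p.1 ≠ p.2)).map
        (fun p : G × G => p.1 - p.2)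
        = (if j = i then intDiff (D i) else 0) + if j = i then 0 else extDiff (D i) (D j) := by
      intro j
      by_cases h : j = i
      · subst h
        simp [intDiff, Finset.filter_val, Finset.product_val]
      · simp only [if_neg h, add_zero, zero_add]
        rw [Multiset.filter_eq_self.2, extDiff, Finset.product_val]
        intro p hp
        simp only [Multiset.mem_product] at hp
        intro he
        exact Finset.disjoint_left.1 (hdisj i j (fun hij => h hij.symm)) hp.1 (he ▸ hp.2)
    rw [Finset.sum_congr rfl (fun j _ => h2 j), Finset.sum_add_distrib, Finset.sum_ite_eq']
    simp
  rw [Finset.sum_congr rfl (fun i _ => hterm i), Finset.sum_add_distrib, famInt, famExt]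

/-- Theorem (DS partitioned): if an `(n, m*k, λ)`-difference set is partitioned by a family of
`m` pairwise disjoint `k`-subsets `D`, then `D` is an `(n,m,k,μ)`-DDF iff it is an
`(n,m,k,λ-μ)`-EDF. -/
theorem ds_partition_ddf_iff_edf {G : Type*} [AddGroup G] [DecidableEq G] [Fintype G]
    (n m k : ℕ) (lam mu : ℤ) (D : Fin m → Finset G)
    (hdisj : ∀ i j, i ≠ j → Disjoint (D i) (D j))
    (hcard : ∀ i, (D i).card = k)
    (hDS : IsDS n (m * k) lam (famU D)) :
    IsDDF n m k mu D ↔ IsEDF n m k (lam - mu) D := by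
  obtain ⟨hn, hk, hcnt⟩ := hDS
  have hshape : FamShape n m k D := ⟨hn, Fintype.card_fin m, hcard, hdisj⟩
  have hsum : ∀ x : G, ((famInt D).count x : ℤ) + ((famExt D).count x : ℤ)
      = if x = 0 then 0 else lam := by
    intro x
    rw [← hcnt x, intDiff_famU D hdisj, Multiset.count_add]
    push_cast
    ring
  constructor
  · rintro ⟨-, hddf⟩
    refine ⟨hshape, fun x => ?_⟩
    have h1 := hsum x
    have h2 := hddf x
    by_cases h : x = 0
    · rw [if_pos h] at h1 h2 ⊢; omega
    · rw [if_neg h] at h1 h2 ⊢; omega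
  · rintro ⟨-, hedf⟩
    refine ⟨hshape, fun x => ?_⟩
    have h1 := hsum x
    have h2 := hedf x
    by_cases h : x = 0
    · rw [if_pos h] at h1 h2 ⊢; omega
    · rw [if_neg h] at h1 h2 ⊢; omega
end

section
/- Let G be a group of order n and let P be an (n, mk, σ, μ)-partial difference set with σ ≠ μ that is partitioned by a collection S' = {D₁, …, D_m} of m pairwise disjoint k-subsets of G*. Then S' is an (n, m, k, λ)-external difference family if and only if S' is a proper (n, m, k, σ−λ, μ−λ)-disjoint partial difference family. -/
open Finset

section Aux
variable {G : Type*} [AddGroup G] [DecidableEq G]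

lemma count_intDiff (D : Finset G) (x : G) :
    (intDiff D).count x = ((D ×ˢ D).filter fun p => p.1 ≠ p.2 ∧ x = p.1 - p.2).card := by
  rw [intDiff, Multiset.count_map, ← Finset.filter_val, Finset.filter_filter]
  rfl

lemma count_extDiff (D₁ D₂ : Finset G) (x : G) :
    (extDiff D₁ D₂).count x = ((D₁ ×ˢ D₂).filter fun p => x = p.1 - p.2).card := by
  rw [extDiff, Multiset.count_map, ← Finset.filter_val]
  rfl

variable {ι : Type*} [Fintype ι] [DecidableEq ι]

lemma key_count (D : ι → Finset G) (hdisj : ∀ i j, i ≠ j → Disjoint (D i) (D j)) (x : G) :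
    (intDiff (famU D)).count x = (famInt D).count x + (famExt D).count x := by
  have hU : ((famU D ×ˢ famU D).filter fun p => p.1 ≠ p.2 ∧ x = p.1 - p.2)
      = (Finset.univ : Finset (ι × ι)).biUnion
        (fun ij => (D ij.1 ×ˢ D ij.2).filter fun p => p.1 ≠ p.2 ∧ x = p.1 - p.2) := by
    ext p
    simp only [mem_filter, mem_biUnion, mem_product, famU, mem_biUnion, mem_univ, true_and]
    constructor
    · rintro ⟨⟨⟨i, hi⟩, ⟨j, hj⟩⟩, h⟩
      exact ⟨(i, j), ⟨hi, hj⟩, h⟩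
    · rintro ⟨⟨i, j⟩, ⟨hi, hj⟩, h⟩
      exact ⟨⟨⟨i, hi⟩, ⟨j, hj⟩⟩, h⟩
  have hpd : ∀ ij ∈ (Finset.univ : Finset (ι × ι)), ∀ ij' ∈ (Finset.univ : Finset (ι × ι)),
      ij ≠ ij' → Disjoint ((D ij.1 ×ˢ D ij.2).filter fun p => p.1 ≠ p.2 ∧ x = p.1 - p.2)
        ((D ij'.1 ×ˢ D ij'.2).filter fun p => p.1 ≠ p.2 ∧ x = p.1 - p.2) := by
    rintro ⟨i, j⟩ - ⟨i', j'⟩ - hne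
    rw [Finset.disjoint_left]
    rintro ⟨a, b⟩ hab hab'
    simp only [mem_filter, mem_product] at hab hab'
    have hi : i = i' := by
      by_contra h
      exact Finset.disjoint_left.mp (hdisj i i' h) hab.1.1 hab'.1.1
    have hj : j = j' := by
      by_contra h
      exact Finset.disjoint_left.mp (hdisj j j' h) hab.1.2 hab'.1.2
    exact hne (by rw [hi, hj])
  rw [count_intDiff, hU, Finset.card_biUnion hpd]
  rw [famInt, famExt, Multiset.count_sum', Multiset.count_sum']
  rw [← Finset.univ_product_univ, Finset.sum_product]
  rw [← Finset.sum_add_distrib]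
  refine Finset.sum_congr rfl fun i _ => ?_
  rw [Multiset.count_sum']
  have : ∀ j ∈ (Finset.univ : Finset ι),
      ((D i ×ˢ D j).filter fun p => p.1 ≠ p.2 ∧ x = p.1 - p.2).card
      = (if j = i then (intDiff (D i)).count x else 0)
        + Multiset.count x (if j = i then 0 else extDiff (D i) (D j)) := by
    intro j _
    by_cases h : j = i
    · subst h
      simp [count_intDiff]
    · rw [if_neg h, if_neg h]
      simp only [Nat.zero_add]
      rw [count_extDiff]
      congr 1
      apply Finset.filter_congr
      rintro ⟨a, b⟩ hab
      simp only [mem_product] at hab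
      have : a ≠ b := by
        intro hab'
        exact Finset.disjoint_left.mp (hdisj i j (fun hh => h hh.symm)) hab.1 (hab' ▸ hab.2)
      simp [this]
  rw [Finset.sum_congr rfl this, Finset.sum_add_distrib, Finset.sum_ite_eq' Finset.univ i]
  simp

end Aux

/-- Theorem: if a proper `(n, m*k, σ, μ)`-PDS is partitioned by a family of `m` pairwise
disjoint `k`-subsets of `G*`, then the family is an `(n,m,k,λ)`-EDF iff it is a proper
`(n,m,k,σ-λ,μ-λ)`-DPDF. -/
theorem pds_partition_edf_iff_proper_dpdf {G : Type*} [AddGroup G] [DecidableEq G] [Fintype G]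
    (n m k : ℕ) (sigma mu lam : ℤ) (D : Fin m → Finset G)
    (hdisj : ∀ i j, i ≠ j → Disjoint (D i) (D j))
    (hcard : ∀ i, (D i).card = k)
    (hzero : ∀ i, (0 : G) ∉ D i)
    (hproper : sigma ≠ mu)
    (hPDS : IsPDS n (m * k) sigma mu (famU D)) :
    IsEDF n m k lam D ↔
      (IsDPDF n m k (sigma - lam) (mu - lam) D ∧ sigma - lam ≠ mu - lam) := by
  have hzeroU : (0 : G) ∉ famU D := by
    simp only [famU, mem_biUnion]
    rintro ⟨i, -, hi⟩
    exact hzero i hi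
  have hkey : ∀ x : G, ((intDiff (famU D)).count x : ℤ)
      = ((famInt D).count x : ℤ) + ((famExt D).count x : ℤ) := by
    intro x; exact_mod_cast key_count D hdisj x
  have hP := hPDS.2.2
  have hshape : FamShape n m k D := ⟨hPDS.1, Fintype.card_fin m, hcard, hdisj⟩
  constructor
  · rintro ⟨-, hE⟩
    refine ⟨⟨hshape, hzero, fun x => ?_⟩, fun h => hproper (by omega)⟩
    have h1 := hP x; have h2 := hE x; have h3 := hkey x
    by_cases hx : x ∈ famU D
    · have hx0 : x ≠ 0 := fun h => hzeroU (h ▸ hx)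
      rw [if_pos hx] at h1 ⊢; rw [if_neg hx0] at h2; omega
    · rw [if_neg hx] at h1 ⊢
      by_cases h0 : x = 0
      · rw [if_pos h0] at h1 h2 ⊢; omega
      · rw [if_neg h0] at h1 h2 ⊢; omega
  · rintro ⟨⟨-, -, hI⟩, -⟩
    refine ⟨hshape, fun x => ?_⟩
    have h1 := hP x; have h2 := hI x; have h3 := hkey x
    by_cases hx : x ∈ famU D
    · have hx0 : x ≠ 0 := fun h => hzeroU (h ▸ hx)
      rw [if_pos hx] at h1 h2; rw [if_neg hx0]; omega
    · rw [if_neg hx] at h1 h2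
      by_cases h0 : x = 0
      · rw [if_pos h0] at h1 h2 ⊢; omega
      · rw [if_neg h0] at h1 h2 ⊢; omega
end

section
/- Let G be a group of order n and let S' = {D₁, …, D_r} be a family of pairwise disjoint k-subsets of G* such that each Dᵢ is an (n, k, λ, μ)-partial difference set; set S = ⋃ᵢ Dᵢ. If any of the following hold: (i) G \ S is a difference set; (ii) G \ S is a proper partial difference set; (iii) G* \ S is a proper partial difference set; then S' is a disjoint partial difference family which is also an external partial difference family (for suitable parameters). -/
open Finset

section Aux

variable {G : Type*} [AddGroup G] [DecidableEq G]

private lemma aux_count_map_val {α β : Type*} [DecidableEq β] (s : Finset α) (f : α → β)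
    (x : β) : ((s.val.map f).count x) = (s.filter fun a => x = f a).card := by
  rw [Multiset.count_map]; rfl

/-- number of `b` with `b ∈ T`, `x + b ∈ T`. -/
private def auxCnt (T : Finset G) (x : G) : ℕ := (T.filter fun b => x + b ∈ T).card

private lemma aux_count_extDiff (D₁ D₂ : Finset G) (x : G) :
    (extDiff D₁ D₂).count x = (D₂.filter fun b => x + b ∈ D₁).card := by
  rw [extDiff, aux_count_map_val]
  apply Finset.card_bij' (fun p _ => p.2) (fun b _ => (x + b, b))
  · intro p hp
    simp only [mem_filter, mem_product] at hp
    simp only [mem_filter]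
    refine ⟨hp.1.2, ?_⟩
    have : p.1 = x + p.2 := by rw [hp.2]; rw [sub_add_cancel]
    rw [← this]; exact hp.1.1
  · intro b hb
    simp only [mem_filter] at hb
    simp only [mem_filter, mem_product]
    exact ⟨⟨hb.2, hb.1⟩, by rw [add_sub_cancel_right]⟩
  · intro p hp
    simp only [mem_filter, mem_product] at hp
    have : p.1 = x + p.2 := by rw [hp.2]; rw [sub_add_cancel]
    ext <;> simp [← this]
  · intro b hb; rfl

private lemma aux_count_intDiff_of_ne (T : Finset G) {x : G} (hx : x ≠ 0) :
    (intDiff T).count x = auxCnt T x := by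
  rw [auxCnt, ← aux_count_extDiff T T x, intDiff, extDiff, aux_count_map_val,
    aux_count_map_val, Finset.filter_filter]
  congr 1
  apply Finset.filter_congr
  intro p hp
  simp only [and_iff_right_iff_imp]
  intro hxe hpe
  exact hx (by rw [hxe, hpe, sub_self])

private lemma aux_count_intDiff_zero (T : Finset G) : (intDiff T).count 0 = 0 := by
  rw [intDiff, aux_count_map_val, Finset.card_eq_zero, Finset.filter_eq_empty_iff]
  intro p hp
  simp only [mem_filter, mem_product] at hp
  intro h
  exact hp.2 (by rwa [eq_comm, sub_eq_zero] at h)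

private lemma aux_cnt_neg (T : Finset G) (x : G) : auxCnt T x = auxCnt T (-x) := by
  unfold auxCnt
  apply Finset.card_bij' (fun b _ => x + b) (fun c _ => -x + c)
  · intro b hb; simp only [mem_filter] at hb ⊢
    exact ⟨hb.2, by rw [neg_add_cancel_left]; exact hb.1⟩
  · intro c hc; simp only [mem_filter] at hc ⊢
    exact ⟨hc.2, by rw [add_neg_cancel_left]; exact hc.1⟩
  · intro b _; rw [neg_add_cancel_left]
  · intro c _; rw [add_neg_cancel_left]

private lemma aux_cnt_univ_filter [Fintype G] (T : Finset G) (x : G) :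
    (Finset.univ.filter fun b : G => x + b ∈ T).card = T.card := by
  apply Finset.card_bij' (fun b _ => x + b) (fun c _ => -x + c)
  · intro b hb; simp only [mem_filter] at hb; exact hb.2
  · intro c hc; simp only [mem_filter, mem_univ, true_and]
    rw [add_neg_cancel_left]; exact hc
  · intro b _; rw [neg_add_cancel_left]
  · intro c _; rw [add_neg_cancel_left]

private lemma aux_cnt_compl [Fintype G] (T : Finset G) (x : G) :
    auxCnt (Finset.univ \ T) x + T.card + T.card = auxCnt T x + Fintype.card G := by
  classical
  set A := T.filter fun b => x + b ∈ T with hA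
  set B := T.filter fun b => ¬ (x + b ∈ T) with hB
  set C := (Finset.univ \ T).filter fun b => x + b ∈ T with hC
  set E := (Finset.univ \ T).filter fun b => ¬ (x + b ∈ T) with hE
  have h1 : A.card + B.card = T.card := card_filter_add_card_filter_not _
  have h2 : C.card + E.card = (Finset.univ \ T).card :=
    card_filter_add_card_filter_not _
  have h3 : (Finset.univ \ T).card + T.card = Fintype.card G := by
    rw [card_sdiff_add_card_eq_card (subset_univ T), card_univ]
  have h4 : A.card + C.card = T.card := by
    rw [← aux_cnt_univ_filter T x, hA, hC, ← Finset.card_union_of_disjoint]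
    · congr 1
      rw [← Finset.filter_union]
      congr 1
      rw [Finset.union_sdiff_of_subset (subset_univ T)]
    · exact Finset.disjoint_filter_filter (Finset.disjoint_sdiff)
  have hcntE : auxCnt (Finset.univ \ T) x = E.card := by
    rw [auxCnt, hE]
    congr 1
    apply Finset.filter_congr
    intro b hb
    simp only [mem_sdiff, mem_univ, true_and]
  have hcntT : auxCnt T x = A.card := rfl
  omega

private lemma aux_cnt_insert_zero (S : Finset G) (h0 : (0:G) ∉ S) {x : G} (hx : x ≠ 0) :
    auxCnt (insert 0 S) x
      = auxCnt S x + (if x ∈ S then 1 else 0) + (if -x ∈ S then 1 else 0) := by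
  unfold auxCnt
  rw [Finset.filter_insert]
  have hmem : x + (0:G) ∈ insert 0 S ↔ x ∈ S := by
    rw [add_zero, Finset.mem_insert]
    simp [hx]
  have hsplit : (S.filter fun b => x + b ∈ insert 0 S)
      = (S.filter fun b => x + b ∈ S) ∪ (S.filter fun b => b = -x) := by
    ext b
    simp only [mem_filter, mem_union, mem_insert]
    constructor
    · rintro ⟨hb, h | h⟩
      · right; exact ⟨hb, (neg_eq_of_add_eq_zero_right h).symm⟩
      · left; exact ⟨hb, h⟩
    · rintro (⟨hb, h⟩ | ⟨hb, h⟩)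
      · exact ⟨hb, Or.inr h⟩
      · exact ⟨hb, Or.inl (by rw [h, add_neg_cancel])⟩
  have hdisj : Disjoint (S.filter fun b => x + b ∈ S) (S.filter fun b => b = -x) := by
    rw [Finset.disjoint_left]
    intro a ha hb
    simp only [mem_filter] at ha hb
    rw [hb.2, add_neg_cancel] at ha
    exact h0 ha.2
  rw [hsplit]
  by_cases hxS : x ∈ S
  · rw [if_pos (hmem.mpr hxS), Finset.card_insert_of_notMem,
      Finset.card_union_of_disjoint hdisj]
    · have : (S.filter fun b => b = -x).card = if -x ∈ S then 1 else 0 := by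
        rw [Finset.filter_eq']
        split <;> simp
      rw [this, if_pos hxS]
      ring
    · rw [Finset.mem_union]
      rintro (h | h) <;> simp only [mem_filter] at h
      · exact h0 h.1
      · exact h0 h.1
  · rw [if_neg (fun hc => hxS (hmem.mp hc)), if_neg hxS,
      Finset.card_union_of_disjoint hdisj]
    have : (S.filter fun b => b = -x).card = if -x ∈ S then 1 else 0 := by
      rw [Finset.filter_eq']
      split <;> simp
    rw [this]
    ring

variable {ι : Type*} [Fintype ι] [DecidableEq ι]

private lemma aux_mem_famU {D : ι → Finset G} {x : G} : x ∈ famU D ↔ ∃ i, x ∈ D i := by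
  simp [famU, Finset.mem_biUnion]

private lemma aux_count_famInt (D : ι → Finset G) (x : G) :
    (famInt D).count x = ∑ i, (intDiff (D i)).count x := Multiset.count_sum'

private lemma aux_count_famExt (D : ι → Finset G) (x : G) :
    (famExt D).count x = ∑ i, ∑ j, if j = i then 0 else (extDiff (D i) (D j)).count x := by
  rw [famExt, Multiset.count_sum']
  congr 1; funext i
  rw [Multiset.count_sum']
  congr 1; funext j
  split <;> simp

private lemma aux_count_famInt_zero (D : ι → Finset G) : (famInt D).count 0 = 0 := by
  rw [aux_count_famInt]
  exact Finset.sum_eq_zero fun i _ => aux_count_intDiff_zero (D i)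

private lemma aux_count_famExt_zero (D : ι → Finset G)
    (hdisj : ∀ i j, i ≠ j → Disjoint (D i) (D j)) : (famExt D).count 0 = 0 := by
  rw [aux_count_famExt]
  apply Finset.sum_eq_zero; intro i _
  apply Finset.sum_eq_zero; intro j _
  split
  · rfl
  · rename_i hji
    rw [aux_count_extDiff, Finset.card_eq_zero, Finset.filter_eq_empty_iff]
    intro b hb hmem
    rw [zero_add] at hmem
    exact (Finset.disjoint_left.mp (hdisj i j (Ne.symm hji)) hmem) hb

private lemma aux_famExt_add_famInt (D : ι → Finset G)
    (hdisj : ∀ i j, i ≠ j → Disjoint (D i) (D j)) {x : G} (hx : x ≠ 0) :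
    (famExt D).count x + (famInt D).count x = auxCnt (famU D) x := by
  have key : ∀ j : ι, ((D j).filter fun b => x + b ∈ famU D).card
      = ∑ i, ((D j).filter fun b => x + b ∈ D i).card := by
    intro j
    have heq : ((D j).filter fun b => x + b ∈ famU D)
        = Finset.univ.biUnion fun i => (D j).filter fun b => x + b ∈ D i := by
      ext b
      simp only [mem_filter, Finset.mem_biUnion, mem_univ, true_and, aux_mem_famU]
      tauto
    rw [heq, Finset.card_biUnion]
    intro i₁ _ i₂ _ hne
    rw [Function.onFun, Finset.disjoint_left]
    intro b hb₁ hb₂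
    simp only [mem_filter] at hb₁ hb₂
    exact Finset.disjoint_left.mp (hdisj i₁ i₂ hne) hb₁.2 hb₂.2
  have hU : ((famU D).filter fun b => x + b ∈ famU D).card
      = ∑ j, ((D j).filter fun b => x + b ∈ famU D).card := by
    rw [famU, Finset.filter_biUnion, Finset.card_biUnion]
    intro i₁ _ i₂ _ hne
    exact Finset.disjoint_filter_filter (hdisj i₁ i₂ hne)
  show _ = ((famU D).filter fun b => x + b ∈ famU D).card
  rw [hU, aux_count_famExt, aux_count_famInt]
  have hint : ∀ i, (intDiff (D i)).count x = ((D i).filter fun b => x + b ∈ D i).card :=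
    fun i => aux_count_intDiff_of_ne _ hx
  calc (∑ i, ∑ j, if j = i then 0 else (extDiff (D i) (D j)).count x)
        + ∑ i, (intDiff (D i)).count x
      = ∑ i, ((∑ j, if j = i then 0 else ((D j).filter fun b => x + b ∈ D i).card)
          + ((D i).filter fun b => x + b ∈ D i).card) := by
        rw [Finset.sum_add_distrib]
        congr 1
        · congr 1; funext i; congr 1; funext j
          split
          · rfl
          · exact aux_count_extDiff _ _ _
        · congr 1; funext i; exact hint i
    _ = ∑ i, ∑ j, ((D j).filter fun b => x + b ∈ D i).card := by
        congr 1; funext i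
        have hci : ((D i).filter fun b => x + b ∈ D i).card
            = ∑ j, if j = i then ((D j).filter fun b => x + b ∈ D i).card else 0 := by
          rw [Finset.sum_ite_eq']; simp
        rw [hci, ← Finset.sum_add_distrib]
        congr 1; funext j
        by_cases h : j = i <;> simp [h]
    _ = ∑ j, ((D j).filter fun b => x + b ∈ famU D).card := by
        rw [Finset.sum_comm]
        congr 1; funext j
        exact (key j).symm

end Aux

/-- Theorem: let each member of a family of `r` pairwise disjoint `k`-subsets of `G*` be an
`(n,k,λ,μ)`-PDS, with union `S`.  If `G \ S` is a difference set, or `G \ S` is a proper PDS,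
or `G* \ S` is a proper PDS, then the family is a DPDF which is also an EPDF
(for suitable parameters). -/
theorem pds_members_complement_gives_dpdf_epdf {G : Type*} [AddGroup G] [DecidableEq G]
    [Fintype G]
    (n r k : ℕ) (lam mu : ℤ) (D : Fin r → Finset G)
    (hdisj : ∀ i j, i ≠ j → Disjoint (D i) (D j))
    (hzero : ∀ i, (0 : G) ∉ D i)
    (hPDS : ∀ i, IsPDS n k lam mu (D i))
    (hcase :
      (∃ k' lam', IsDS n k' lam' (Finset.univ \ famU D)) ∨
      (∃ k' a b, a ≠ b ∧ IsPDS n k' a b (Finset.univ \ famU D)) ∨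
      (∃ k' a b, a ≠ b ∧ IsPDS n k' a b ((Finset.univ.erase (0 : G)) \ famU D))) :
    (∃ a b : ℤ, IsDPDF n r k a b D) ∧ (∃ a b : ℤ, IsEPDF n r k a b D) := by
  classical
  have hn : Fintype.card G = n := by
    rcases hcase with ⟨k', lam', h⟩ | ⟨k', a, b, _, h⟩ | ⟨k', a, b, _, h⟩ <;> exact h.1
  have h0S : (0:G) ∉ famU D := by
    rw [aux_mem_famU]; rintro ⟨i, hi⟩; exact hzero i hi
  have shape : FamShape n r k D := ⟨hn, Fintype.card_fin r, fun i => (hPDS i).2.1, hdisj⟩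
  -- the number of members containing a fixed x
  have hone : ∀ x : G, x ∈ famU D → (Finset.univ.filter fun i => x ∈ D i).card = 1 := by
    intro x hx
    rw [aux_mem_famU] at hx
    obtain ⟨i₀, hi₀⟩ := hx
    rw [Finset.card_eq_one]
    refine ⟨i₀, ?_⟩
    ext j
    simp only [mem_filter, mem_univ, true_and, Finset.mem_singleton]
    constructor
    · intro hj
      by_contra hne
      exact Finset.disjoint_left.mp (hdisj j i₀ hne) hj hi₀
    · intro h; rw [h]; exact hi₀
  have hzeroc : ∀ x : G, x ∉ famU D → (Finset.univ.filter fun i => x ∈ D i).card = 0 := by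
    intro x hx
    rw [Finset.card_eq_zero, Finset.filter_eq_empty_iff]
    intro i _ hmem
    exact hx (aux_mem_famU.mpr ⟨i, hmem⟩)
  -- the internal count
  have hfamInt : ∀ x : G, x ≠ 0 → ((famInt D).count x : ℤ)
      = if x ∈ famU D then lam + ((r:ℤ) - 1) * mu else (r:ℤ) * mu := by
    intro x hx
    rw [aux_count_famInt]
    push_cast
    have hterm : (∑ i, ((intDiff (D i)).count x : ℤ)) = ∑ i, (if x ∈ D i then lam else mu) :=
      Finset.sum_congr rfl fun i _ => by rw [(hPDS i).2.2 x, if_neg hx]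
    rw [hterm, Finset.sum_ite, Finset.sum_const, Finset.sum_const]
    have hsum : (Finset.univ.filter fun i => x ∈ D i).card
        + (Finset.univ.filter fun i => x ∉ D i).card = r := by
      rw [card_filter_add_card_filter_not]
      simp
    by_cases hx' : x ∈ famU D
    · have h1 := hone x hx'
      have h2 : (Finset.univ.filter fun i => x ∉ D i).card = r - 1 := by omega
      have hr : 1 ≤ r := by omega
      rw [if_pos hx', h1, h2, one_nsmul, nsmul_eq_mul, Nat.cast_sub hr]
      push_cast
      ring
    · have h1 := hzeroc x hx'
      have h2 : (Finset.univ.filter fun i => x ∉ D i).card = r := by omega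
      rw [if_neg hx', h1, h2, zero_nsmul, nsmul_eq_mul, zero_add]
  constructor
  · refine ⟨lam + ((r:ℤ)-1)*mu, (r:ℤ)*mu, shape, hzero, ?_⟩
    intro x
    by_cases hx : x = 0
    · subst hx
      rw [aux_count_famInt_zero, if_neg h0S, if_pos rfl]
      norm_num
    · rw [hfamInt x hx]
      by_cases hx' : x ∈ famU D
      · rw [if_pos hx', if_pos hx']
      · rw [if_neg hx', if_neg hx', if_neg hx]
  · -- EPDF part
    have hScard : ∃ A B : ℤ, ∀ x : G, x ≠ 0 →
        (auxCnt (famU D) x : ℤ) = if x ∈ famU D then A else B := by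
      rcases hcase with ⟨k', lam', h⟩ | ⟨k', a, b, hab, h⟩ | ⟨k', a, b, hab, h⟩
      · refine ⟨lam' + 2*(famU D).card - n, lam' + 2*(famU D).card - n, ?_⟩
        intro x hx
        have hc := aux_cnt_compl (famU D) x
        have hP : ((intDiff (Finset.univ \ famU D)).count x : ℤ) = lam' := by
          rw [h.2.2 x, if_neg hx]
        rw [aux_count_intDiff_of_ne _ hx] at hP
        rw [hn] at hc
        split <;> omega
      · refine ⟨b + 2*(famU D).card - n, a + 2*(famU D).card - n, ?_⟩
        intro x hx
        have hc := aux_cnt_compl (famU D) x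
        rw [hn] at hc
        by_cases hx' : x ∈ famU D
        · have hP : ((intDiff (Finset.univ \ famU D)).count x : ℤ) = b := by
            rw [h.2.2 x, if_neg (by simp [Finset.mem_sdiff, hx']), if_neg hx]
          rw [aux_count_intDiff_of_ne _ hx] at hP
          rw [if_pos hx']
          omega
        · have hP : ((intDiff (Finset.univ \ famU D)).count x : ℤ) = a := by
            rw [h.2.2 x, if_pos (by simp [Finset.mem_sdiff, hx'])]
          rw [aux_count_intDiff_of_ne _ hx] at hP
          rw [if_neg hx']
          omega
      · -- case (iii)
        set P := (Finset.univ.erase (0:G)) \ famU D with hPdef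
        have hPeq : P = Finset.univ \ insert 0 (famU D) := by
          ext y
          simp only [hPdef, Finset.mem_sdiff, Finset.mem_erase, Finset.mem_insert,
            mem_univ, true_and, and_true]
          tauto
        have hmemP : ∀ y : G, y ∈ P ↔ (y ≠ 0 ∧ y ∉ famU D) := by
          intro y
          simp [hPdef, Finset.mem_sdiff, Finset.mem_erase]
        have hsym : ∀ y : G, y ∈ P → -y ∈ P := by
          intro y hy
          have hy0 : y ≠ 0 := ((hmemP y).mp hy).1
          by_contra hny
          have h1 : ((intDiff P).count y : ℤ) = a := by rw [h.2.2 y, if_pos hy]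
          have h2 : ((intDiff P).count (-y) : ℤ) = b := by
            rw [h.2.2 (-y), if_neg hny, if_neg (neg_ne_zero.mpr hy0)]
          rw [aux_count_intDiff_of_ne _ hy0] at h1
          rw [aux_count_intDiff_of_ne _ (neg_ne_zero.mpr hy0), ← aux_cnt_neg] at h2
          exact hab (by omega)
        refine ⟨b + 2*(famU D).card - n, a + 2*(famU D).card + 2 - n, ?_⟩
        intro x hx
        have hc := aux_cnt_compl (insert 0 (famU D)) x
        rw [hn, Finset.card_insert_of_notMem h0S, ← hPeq] at hc
        have hins := aux_cnt_insert_zero (famU D) h0S hx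
        by_cases hx' : x ∈ famU D
        · have hxP : x ∉ P := fun hc' => ((hmemP x).mp hc').2 hx'
          have hP : ((intDiff P).count x : ℤ) = b := by
            rw [h.2.2 x, if_neg hxP, if_neg hx]
          rw [aux_count_intDiff_of_ne _ hx] at hP
          have hnx : -x ∈ famU D := by
            by_contra hns
            have hmem : -x ∈ P := (hmemP (-x)).mpr ⟨neg_ne_zero.mpr hx, hns⟩
            have := hsym _ hmem
            rw [neg_neg] at this
            exact hxP this
          rw [if_pos hx', if_pos hnx] at hins
          rw [if_pos hx']
          omega
        · have hxP : x ∈ P := (hmemP x).mpr ⟨hx, hx'⟩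
          have hP : ((intDiff P).count x : ℤ) = a := by rw [h.2.2 x, if_pos hxP]
          rw [aux_count_intDiff_of_ne _ hx] at hP
          have hnx : -x ∉ famU D := ((hmemP (-x)).mp (hsym _ hxP)).2
          rw [if_neg hx', if_neg hnx] at hins
          rw [if_neg hx']
          omega
    obtain ⟨A, B, hAB⟩ := hScard
    refine ⟨A - (lam + ((r:ℤ)-1)*mu), B - (r:ℤ)*mu, shape, hzero, ?_⟩
    intro x
    by_cases hx : x = 0
    · subst hx
      rw [aux_count_famExt_zero D hdisj, if_neg h0S, if_pos rfl]
      norm_num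
    · have hkey : ((famExt D).count x : ℤ) + ((famInt D).count x : ℤ)
          = (auxCnt (famU D) x : ℤ) := by
        exact_mod_cast congrArg (Nat.cast : ℕ → ℤ) (aux_famExt_add_famInt D hdisj hx)
      have hI := hfamInt x hx
      have hC := hAB x hx
      by_cases hx' : x ∈ famU D
      · rw [if_pos hx'] at hI hC ⊢
        linarith
      · rw [if_neg hx'] at hI hC ⊢
        rw [if_neg hx]
        linarith
end

section
/- Let q = ef + 1 = ερ + 1 be a prime power with e, f, ε, ρ > 1 and ε | e. (a) Suppose q ≡ 1 (mod 2ε). (i) If C₀^ε is a partial difference set, then it must be proper (in particular C₀^ε cannot be a difference set). (ii) If f is even and C₀^ε′ is a disjoint partial difference family, then it must be proper. Moreover, if ε > 2: (iii) if C₀^ε is a partial difference set then 2 ∈ C₀^ε and −2 ∈ C₀^ε; (iv) if f is even and C₀^ε′ is a disjoint partial difference family then 2 ∈ C₀^ε and −2 ∈ C₀^ε. (b) Suppose q ≡ ε + 1 (mod 2ε) and ε is even. Then: (i) C₀^ε cannot be a proper partial difference set; (ii) if ε < e, then C₀^ε′ cannot be a proper disjoint partial difference family. -/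
open Finset

section AuxLemmas

open Finset

lemma aux_card_parity_inv {β : Type*} [DecidableEq β] (T : Finset β) (σ : β → β)
    (hmem : ∀ a ∈ T, σ a ∈ T) (hinv : ∀ a ∈ T, σ (σ a) = a) :
    (T.card : ZMod 2) = ((T.filter fun a => σ a = a).card : ZMod 2) := by
  classical
  have hsplit : (T.filter fun a => σ a = a).card + (T.filter fun a => ¬ σ a = a).card = T.card :=
    Finset.card_filter_add_card_filter_not _
  have hzero : (((T.filter fun a => ¬ σ a = a).card : ZMod 2)) = 0 := by
    have hs : ∑ _a ∈ (T.filter fun a => ¬ σ a = a), (1 : ZMod 2) = 0 := by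
      refine Finset.sum_involution (fun a _ => σ a) (fun a ha => by decide)
        (fun a ha _ => (Finset.mem_filter.mp ha).2) (fun a ha => ?_)
        (fun a ha => hinv a (Finset.mem_filter.mp ha).1)
      rcases Finset.mem_filter.mp ha with ⟨haT, hane⟩
      refine Finset.mem_filter.mpr ⟨hmem a haT, ?_⟩
      rw [hinv a haT]
      exact fun h => hane h.symm
    simpa using hs
  have h2 : ((T.card : ZMod 2)) = ((T.filter fun a => σ a = a).card : ZMod 2)
      + ((T.filter fun a => ¬ σ a = a).card : ZMod 2) := by
    rw [← Nat.cast_add, hsplit]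
  rw [h2, hzero, add_zero]

lemma aux_ite_val {P Q : Prop} [Decidable P] [Decidable Q] (hQ : ¬ Q) (lam mu : ℤ)
    (hlm : lam = mu) :
    (if P then lam else if Q then (0 : ℤ) else mu) = lam := by
  by_cases hP : P
  · rw [if_pos hP]
  · rw [if_neg hP, if_neg hQ, hlm]

lemma aux_intDiff_count {G : Type*} [AddGroup G] [DecidableEq G] (D : Finset G) (x : G) :
    (intDiff D).count x
      = (((D ×ˢ D).filter fun p => p.1 ≠ p.2).filter fun p => x = p.1 - p.2).card := by
  rw [intDiff, Multiset.count_map]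
  rfl

lemma aux_intDiff_count_neg {G : Type*} [AddGroup G] [DecidableEq G] (D : Finset G) (x : G) :
    (intDiff D).count (-x) = (intDiff D).count x := by
  rw [aux_intDiff_count, aux_intDiff_count]
  refine Finset.card_bij' (fun p _ => (p.2, p.1)) (fun p _ => (p.2, p.1)) ?_ ?_ ?_ ?_
  · intro p hp
    simp only [Finset.mem_filter, Finset.mem_product] at hp ⊢
    obtain ⟨⟨⟨h1, h2⟩, hne⟩, hx⟩ := hp
    refine ⟨⟨⟨h2, h1⟩, fun h => hne h.symm⟩, ?_⟩
    rw [← neg_sub, ← hx, neg_neg]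
  · intro p hp
    simp only [Finset.mem_filter, Finset.mem_product] at hp ⊢
    obtain ⟨⟨⟨h1, h2⟩, hne⟩, hx⟩ := hp
    refine ⟨⟨⟨h2, h1⟩, fun h => hne h.symm⟩, ?_⟩
    rw [← neg_sub, ← hx]
  · intro p hp; rfl
  · intro p hp; rfl

lemma aux_famInt_count_neg {G : Type*} [AddGroup G] [DecidableEq G] {ι : Type*} [Fintype ι]
    [DecidableEq ι] (D : ι → Finset G) (x : G) :
    (famInt D).count (-x) = (famInt D).count x := by
  rw [famInt, Multiset.count_sum', Multiset.count_sum']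
  exact Finset.sum_congr rfl fun i _ => aux_intDiff_count_neg (D i) x

section AuxField
variable {F : Type*} [Field F] [DecidableEq F]

lemma aux_orderOf_prim [Fintype F] {α : F}
    (hα : IsPrimitiveElt α) (h3 : 3 ≤ Fintype.card F) :
    orderOf α = Fintype.card F - 1 := by
  have hα0 : α ≠ 0 := by
    rintro rfl
    have hsub : (Finset.univ : Finset F) ⊆ {0, 1} := by
      intro x _
      rcases eq_or_ne x 0 with rfl | hx
      · simp
      · obtain ⟨k, rfl⟩ := hα x hx
        cases k with
        | zero => simp
        | succ n => simp [pow_succ] at hx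
    have h1 := Finset.card_le_card hsub
    rw [Finset.card_univ] at h1
    have h2 : ({0, 1} : Finset F).card ≤ 2 :=
      (Finset.card_insert_le _ _).trans (by simp)
    omega
  have hpow : α ^ (Fintype.card F - 1) = 1 := FiniteField.pow_card_sub_one_eq_one α hα0
  have hfin : IsOfFinOrder α := isOfFinOrder_iff_pow_eq_one.mpr ⟨_, by omega, hpow⟩
  have hpos : 0 < orderOf α := hfin.orderOf_pos
  have hdvd : orderOf α ∣ Fintype.card F - 1 := orderOf_dvd_of_pow_eq_one hpow
  have hle : Fintype.card F - 1 ≤ orderOf α := by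
    have hsub : (Finset.univ : Finset F)
        ⊆ insert 0 ((Finset.range (orderOf α)).image (α ^ ·)) := by
      intro x _
      rcases eq_or_ne x 0 with rfl | hx
      · exact Finset.mem_insert_self _ _
      · obtain ⟨k, rfl⟩ := hα x hx
        exact Finset.mem_insert_of_mem (Finset.mem_image.mpr ⟨k % orderOf α,
          Finset.mem_range.mpr (Nat.mod_lt _ hpos), pow_mod_orderOf α k⟩)
    have h1 := Finset.card_le_card hsub
    rw [Finset.card_univ] at h1
    have h2 := Finset.card_insert_le (0 : F) ((Finset.range (orderOf α)).image (α ^ ·))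
    have h3' := Finset.card_image_le (f := (α ^ ·)) (s := Finset.range (orderOf α))
    rw [Finset.card_range] at h3'
    omega
  exact Nat.le_antisymm (Nat.le_of_dvd (by omega) hdvd) hle

lemma aux_mem_cyclo_zero {α : F} {E R : ℕ}
    (hα : IsPrimitiveElt α) (hord : orderOf α = E * R) (hE : 0 < E) (hR : 0 < R) (x : F) :
    x ∈ cyclo α E R 0 ↔ x ^ R = 1 := by
  constructor
  · intro hx
    obtain ⟨j, -, rfl⟩ := Finset.mem_image.mp hx
    rw [← pow_mul]
    have h : (0 + E * j) * R = E * R * j := by ring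
    rw [h, pow_mul, ← hord, pow_orderOf_eq_one, one_pow]
  · intro hx
    have hx0 : x ≠ 0 := by rintro rfl; rw [zero_pow hR.ne'] at hx; exact zero_ne_one hx
    obtain ⟨k, rfl⟩ := hα x hx0
    rw [← pow_mul] at hx
    have hdvd : E * R ∣ k * R := hord ▸ orderOf_dvd_of_pow_eq_one hx
    have hEk : E ∣ k := (Nat.mul_dvd_mul_iff_right hR).mp hdvd
    obtain ⟨m, rfl⟩ := hEk
    refine Finset.mem_image.mpr ⟨m % R, Finset.mem_range.mpr (Nat.mod_lt _ hR), ?_⟩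
    rw [zero_add]
    have hone : α ^ (E * R) = 1 := by rw [← hord]; exact pow_orderOf_eq_one α
    have hm : E * m = E * (m % R) + E * R * (m / R) := by
      calc E * m = E * (m % R + R * (m / R)) := by rw [Nat.mod_add_div m R]
        _ = E * (m % R) + E * R * (m / R) := by ring
    rw [hm, pow_add, pow_mul α (E * R), hone, one_pow, mul_one]

lemma aux_one_mem_cyclo {α : F} {E R : ℕ} (hR : 0 < R) : (1 : F) ∈ cyclo α E R 0 :=
  Finset.mem_image.mpr ⟨0, Finset.mem_range.mpr hR, by simp⟩

lemma aux_pow_half {α : F} {m : ℕ} (hord : orderOf α = m) (hm2 : 2 ∣ m) (hm0 : 0 < m) :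
    α ^ (m / 2) = -1 ∧ (-1 : F) ≠ 1 := by
  have hlt : m / 2 < m := Nat.div_lt_self hm0 one_lt_two
  have hpos2 : 0 < m / 2 := Nat.div_pos (Nat.le_of_dvd hm0 hm2) two_pos
  have hx2 : α ^ (m / 2) * α ^ (m / 2) = 1 := by
    rw [← pow_add]
    have h : m / 2 + m / 2 = m := by omega
    rw [h, ← hord, pow_orderOf_eq_one]
  have hx1 : α ^ (m / 2) ≠ 1 := by
    intro h
    have hd := orderOf_dvd_of_pow_eq_one h
    rw [hord] at hd
    exact absurd (Nat.le_of_dvd hpos2 hd) (by omega)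
  rcases mul_self_eq_one_iff.mp hx2 with h | h
  · exact absurd h hx1
  · exact ⟨h, fun h1 => hx1 (h.trans h1)⟩

lemma aux_neg_mem_cyclo {α : F} {E R : ℕ}
    (hord : orderOf α = E * R) (hE : 0 < E) (hR : 0 < R) (hR2 : 2 ∣ R) (c : ℕ) {a : F}
    (ha : a ∈ cyclo α E R c) : -a ∈ cyclo α E R c := by
  obtain ⟨j, -, rfl⟩ := Finset.mem_image.mp ha
  have hm2 : 2 ∣ E * R := Dvd.dvd.mul_left hR2 E
  obtain ⟨hhalf, -⟩ := aux_pow_half hord hm2 (by positivity)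
  have hexp : E * R / 2 = E * (R / 2) := Nat.mul_div_assoc E hR2
  refine Finset.mem_image.mpr ⟨(j + R / 2) % R, Finset.mem_range.mpr (Nat.mod_lt _ hR), ?_⟩
  have hone : α ^ (E * R) = 1 := by rw [← hord]; exact pow_orderOf_eq_one α
  have h1 : α ^ (c + E * (j + R / 2)) = α ^ (c + E * ((j + R / 2) % R)) := by
    have hm : c + E * (j + R / 2)
        = (c + E * ((j + R / 2) % R)) + E * R * ((j + R / 2) / R) := by
      calc c + E * (j + R / 2)
          = c + E * ((j + R / 2) % R + R * ((j + R / 2) / R)) := by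
            rw [Nat.mod_add_div (j + R / 2) R]
        _ = (c + E * ((j + R / 2) % R)) + E * R * ((j + R / 2) / R) := by ring
    rw [hm, pow_add, pow_mul α (E * R), hone, one_pow, mul_one]
  rw [← h1]
  have h2 : c + E * (j + R / 2) = (c + E * j) + E * (R / 2) := by ring
  rw [h2, pow_add, ← hexp, hhalf, mul_neg_one]

lemma aux_famU_subset {α : F} {e f eps rho : ℕ}
    (hα : IsPrimitiveElt α) (hord : orderOf α = eps * rho)
    (hepse : eps ∣ e) (heps : 0 < eps) (hrho : 0 < rho) (i : ℕ) :
    cyclo α e f (eps * i) ⊆ cyclo α eps rho 0 := by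
  intro x hx
  obtain ⟨j, -, rfl⟩ := Finset.mem_image.mp hx
  rw [aux_mem_cyclo_zero hα hord heps hrho]
  obtain ⟨d, hd⟩ := hepse
  rw [← pow_mul]
  have h : (eps * i + e * j) * rho = eps * rho * (i + d * j) := by rw [hd]; ring
  rw [h, pow_mul, ← hord, pow_orderOf_eq_one, one_pow]

lemma aux_intDiff_parity (D : Finset F)
    (hD : ∀ a ∈ D, -a ∈ D) (h2 : (2 : F) ≠ 0) (x : F) (hx : x ≠ 0) :
    ((intDiff D).count x : ZMod 2) = if x / 2 ∈ D then 1 else 0 := by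
  haveI : NeZero (2 : F) := ⟨h2⟩
  rw [aux_intDiff_count]
  set T := ((D ×ˢ D).filter fun p => p.1 ≠ p.2).filter (fun p => x = p.1 - p.2) with hT
  have hmemT : ∀ p : F × F, p ∈ T ↔ (p.1 ∈ D ∧ p.2 ∈ D) ∧ p.1 ≠ p.2 ∧ x = p.1 - p.2 := by
    intro p
    simp only [hT, Finset.mem_filter, Finset.mem_product, and_assoc]
  have hpar := aux_card_parity_inv T (fun p => (-p.2, -p.1)) ?_ ?_
  · rw [hpar]
    by_cases hxD : x / 2 ∈ D
    · rw [if_pos hxD]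
      have hfix : T.filter (fun p : F × F => (-p.2, -p.1) = p) = {(x / 2, -(x / 2))} := by
        ext p
        simp only [Finset.mem_filter, Finset.mem_singleton]
        constructor
        · rintro ⟨hpT, hf⟩
          obtain ⟨⟨h1, h2'⟩, hne, hxe⟩ := (hmemT p).mp hpT
          have hp2 : -p.1 = p.2 := congrArg Prod.snd hf
          have hx2 : x = p.1 * 2 := by
            rw [hxe, ← hp2]
            ring
          have hp1x : p.1 = x / 2 := ((div_eq_iff h2).mpr hx2).symm
          have hpp : p = (p.1, p.2) := rfl
          rw [hpp, hp1x, ← hp2, hp1x]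
        · rintro rfl
          refine ⟨(hmemT _).mpr ⟨⟨hxD, hD _ hxD⟩, ?_, ?_⟩, ?_⟩
          · intro h
            simp only at h
            apply hx
            have hx0 : x / 2 + x / 2 = 0 := by
              nth_rewrite 2 [h]
              simp
            rwa [add_halves] at hx0
          · simp only
            rw [sub_neg_eq_add, add_halves]
          · simp only [neg_neg]
      rw [hfix]
      simp
    · rw [if_neg hxD]
      have hfix : T.filter (fun p : F × F => (-p.2, -p.1) = p) = ∅ := by
        ext p
        simp only [Finset.mem_filter, Finset.notMem_empty, iff_false, not_and]
        intro hpT hf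
        obtain ⟨⟨h1, h2'⟩, hne, hxe⟩ := (hmemT p).mp hpT
        have hp2 : -p.1 = p.2 := congrArg Prod.snd hf
        have hx2 : x = p.1 * 2 := by
          rw [hxe, ← hp2]
          ring
        have hp1x : p.1 = x / 2 := ((div_eq_iff h2).mpr hx2).symm
        exact hxD (hp1x ▸ h1)
      rw [hfix]
      simp
  · intro p hp
    obtain ⟨⟨h1, h2'⟩, hne, hxe⟩ := (hmemT p).mp hp
    refine (hmemT _).mpr ⟨⟨hD _ h2', hD _ h1⟩, ?_, ?_⟩
    · simpa only [ne_eq, neg_inj] using fun h => hne h.symm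
    · simp only
      rw [hxe]
      ring
  · intro p hp
    simp

lemma aux_famInt_parity {ι : Type*} [Fintype ι] [DecidableEq ι] (D : ι → Finset F)
    (hD : ∀ i, ∀ a ∈ D i, -a ∈ D i)
    (hdisj : ∀ i j, i ≠ j → Disjoint (D i) (D j)) (h2 : (2 : F) ≠ 0) (x : F) (hx : x ≠ 0) :
    ((famInt D).count x : ZMod 2) = if x / 2 ∈ famU D then 1 else 0 := by
  rw [famInt, Multiset.count_sum', Nat.cast_sum]
  have hterm : ∀ i, (((intDiff (D i)).count x : ℕ) : ZMod 2) = if x / 2 ∈ D i then 1 else 0 :=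
    fun i => aux_intDiff_parity (D i) (hD i) h2 x hx
  rw [Finset.sum_congr rfl fun i _ => hterm i]
  by_cases hU : x / 2 ∈ famU D
  · rw [if_pos hU]
    obtain ⟨i0, -, hi0⟩ := Finset.mem_biUnion.mp hU
    have hfun : ∀ i, (if x / 2 ∈ D i then (1 : ZMod 2) else 0) = if i = i0 then 1 else 0 := by
      intro i
      by_cases hii : i = i0
      · subst hii
        rw [if_pos hi0, if_pos rfl]
      · rw [if_neg hii, if_neg fun hmem => Finset.disjoint_left.mp (hdisj i i0 hii) hmem hi0]
    rw [Finset.sum_congr rfl fun i _ => hfun i,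
      Finset.sum_ite_eq' Finset.univ i0 fun _ => (1 : ZMod 2), if_pos (Finset.mem_univ i0)]
  · rw [if_neg hU]
    have hnone : ∀ i, x / 2 ∉ D i :=
      fun i hmem => hU (Finset.mem_biUnion.mpr ⟨i, Finset.mem_univ i, hmem⟩)
    rw [Finset.sum_congr rfl fun i _ => if_neg (hnone i), Finset.sum_const_zero]

end AuxField

end AuxLemmas

/-- Corollary: let `q = ef+1 = ερ+1` be a prime power with `ε ∣ e`.
(a) If `q ≡ 1 (mod 2ε)`: (i) any PDS `C₀^ε` is proper; (ii) if `f` is even, any DPDF `C₀^ε′`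
is proper; for `ε > 2`: (iii) if `C₀^ε` is a PDS then `±2 ∈ C₀^ε`; (iv) if `f` is even and
`C₀^ε′` is a DPDF then `±2 ∈ C₀^ε`.
(b) If `q ≡ ε+1 (mod 2ε)` and `ε` is even: (i) `C₀^ε` cannot be a proper PDS; (ii) if `ε < e`
then `C₀^ε′` cannot be a proper DPDF. -/
theorem proper_pds_dpdf_congruence_conditions {F : Type*} [Field F] [Fintype F] [DecidableEq F]
    (q e f eps rho : ℕ) (α : F)
    (hq : Fintype.card F = q) (hα : IsPrimitiveElt α)
    (hef : q = e * f + 1) (he : 1 < e) (hf : 1 < f)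
    (herho : q = eps * rho + 1) (hepse : eps ∣ e) (heps : 1 < eps) (hrho : 1 < rho) :
    (q % (2 * eps) = 1 →
      ((∀ lam mu : ℤ, IsPDS q rho lam mu (cyclo α eps rho 0) → lam ≠ mu) ∧
       (Even f → ∀ lam mu : ℤ,
          IsDPDF q (e / eps) f lam mu
            (fun i : Fin (e / eps) => cyclo α e f (eps * (i : ℕ))) → lam ≠ mu) ∧
       (2 < eps → ∀ lam mu : ℤ, IsPDS q rho lam mu (cyclo α eps rho 0) →
          (2 : F) ∈ cyclo α eps rho 0 ∧ (-2 : F) ∈ cyclo α eps rho 0) ∧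
       (2 < eps → Even f → ∀ lam mu : ℤ,
          IsDPDF q (e / eps) f lam mu
            (fun i : Fin (e / eps) => cyclo α e f (eps * (i : ℕ))) →
          (2 : F) ∈ cyclo α eps rho 0 ∧ (-2 : F) ∈ cyclo α eps rho 0))) ∧
    (q % (2 * eps) = eps + 1 → Even eps →
      ((∀ lam mu : ℤ, IsPDS q rho lam mu (cyclo α eps rho 0) → lam = mu) ∧
       (eps < e → ∀ lam mu : ℤ,
          IsDPDF q (e / eps) f lam mu
            (fun i : Fin (e / eps) => cyclo α e f (eps * (i : ℕ))) → lam = mu)))  := by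
  classical
  have h4 : 2 * 2 ≤ e * f := Nat.mul_le_mul he hf
  have h3F : 3 ≤ Fintype.card F := by rw [hq]; omega
  have hord1 : orderOf α = Fintype.card F - 1 := aux_orderOf_prim hα h3F
  have hordef : orderOf α = e * f := by rw [hord1, hq]; omega
  have hordeps : orderOf α = eps * rho := by rw [hordef]; omega
  have hepspos : 0 < eps := by omega
  have hrhopos : 0 < rho := by omega
  have hepos : 0 < e := by omega
  have hfpos : 0 < f := by omega
  have hα0 : α ≠ 0 := by
    intro h
    have h1 := pow_orderOf_eq_one α
    rw [hordeps, h, zero_pow (Nat.mul_ne_zero (by omega : eps ≠ 0) (by omega : rho ≠ 0))] at h1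
    exact zero_ne_one h1
  have hmemC : ∀ x : F, x ∈ cyclo α eps rho 0 ↔ x ^ rho = 1 :=
    aux_mem_cyclo_zero hα hordeps hepspos hrhopos
  have h1C : (1 : F) ∈ cyclo α eps rho 0 := aux_one_mem_cyclo hrhopos
  have hαC : α ∉ cyclo α eps rho 0 := by
    rw [hmemC]
    intro h
    have hd := orderOf_dvd_of_pow_eq_one h
    rw [hordeps] at hd
    have hle := Nat.le_of_dvd hrhopos hd
    have h2r : 2 * rho ≤ eps * rho := Nat.mul_le_mul heps le_rfl
    omega
  have hdpos : 0 < e / eps := Nat.div_pos (Nat.le_of_dvd hepos hepse) hepspos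
  have hmemU : ∀ x : F, x ∈ famU (fun i : Fin (e / eps) => cyclo α e f (eps * (i : ℕ)))
      ↔ ∃ i : Fin (e / eps), x ∈ cyclo α e f (eps * (i : ℕ)) := by
    intro x
    simp [famU, Finset.mem_biUnion]
  have hUsub : famU (fun i : Fin (e / eps) => cyclo α e f (eps * (i : ℕ)))
      ⊆ cyclo α eps rho 0 := by
    intro x hx
    obtain ⟨i, hi⟩ := (hmemU x).mp hx
    exact aux_famU_subset hα hordeps hepse hepspos hrhopos _ hi
  have h1U : (1 : F) ∈ famU (fun i : Fin (e / eps) => cyclo α e f (eps * (i : ℕ))) := by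
    refine (hmemU 1).mpr ⟨⟨0, hdpos⟩, ?_⟩
    have h0 : eps * (((⟨0, hdpos⟩ : Fin (e / eps))) : ℕ) = 0 := by simp
    rw [h0]
    exact aux_one_mem_cyclo hfpos
  constructor
  · -- part (a)
    intro hmod
    have hdm := Nat.div_add_mod q (2 * eps)
    have hkey : eps * rho = 2 * eps * (q / (2 * eps)) := by omega
    have hrho2 : 2 ∣ rho := by
      have h' : eps * rho = eps * (2 * (q / (2 * eps))) := by rw [hkey]; ring
      exact ⟨_, Nat.eq_of_mul_eq_mul_left hepspos h'⟩
    have hm2 : 2 ∣ eps * rho := Dvd.dvd.mul_left hrho2 eps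
    have hneg1 : (-1 : F) ≠ 1 := (aux_pow_half hordeps hm2 (by positivity)).2
    have h2ne : (2 : F) ≠ 0 := fun h => hneg1 (by linear_combination -h)
    have h2ane : (2 : F) * α ≠ 0 := mul_ne_zero h2ne hα0
    have h2aane : (2 : F) * (α * α) ≠ 0 := mul_ne_zero h2ne (mul_ne_zero hα0 hα0)
    have hCsym : ∀ a ∈ cyclo α eps rho 0, -a ∈ cyclo α eps rho 0 :=
      fun a ha => aux_neg_mem_cyclo hordeps hepspos hrhopos hrho2 0 ha
    have hmulC : 2 * α ∈ cyclo α eps rho 0 → 2 * (α * α) ∈ cyclo α eps rho 0 → False := by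
      intro hca hca2
      rw [hmemC] at hca hca2
      apply hαC
      rw [hmemC]
      have hx : (2 * α) ^ rho * α ^ rho = 1 := by
        rw [← mul_pow]
        have hh : 2 * α * α = 2 * (α * α) := by ring
        rw [hh, hca2]
      rwa [hca, one_mul] at hx
    have hα2C : 2 < eps → α * α ∉ cyclo α eps rho 0 := by
      intro heps2 h
      rw [hmemC] at h
      have h' : α ^ (2 * rho) = 1 := by
        rw [two_mul, pow_add, ← mul_pow]
        exact h
      have hd := orderOf_dvd_of_pow_eq_one h'
      rw [hordeps] at hd
      have h2' : eps ∣ 2 := (Nat.mul_dvd_mul_iff_right hrhopos).mp hd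
      have := Nat.le_of_dvd (by omega) h2'
      omega
    have hneg2 : (2 : F) ∈ cyclo α eps rho 0 → (-2 : F) ∈ cyclo α eps rho 0 := by
      intro h
      rw [hmemC] at h ⊢
      obtain ⟨t, ht⟩ := hrho2
      have heven : Even rho := ⟨t, by omega⟩
      rw [heven.neg_pow]
      exact h
    have par2C := aux_intDiff_parity (cyclo α eps rho 0) hCsym h2ne 2 h2ne
    rw [div_self h2ne, if_pos h1C] at par2C
    have par2aC := aux_intDiff_parity (cyclo α eps rho 0) hCsym h2ne (2 * α) h2ane
    rw [mul_div_cancel_left₀ α h2ne, if_neg hαC] at par2aC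
    refine ⟨?_, ?_, ?_, ?_⟩
    · -- (a)(i)
      intro lam mu hP hlm
      obtain ⟨-, -, hcnt⟩ := hP
      have c2 : ((intDiff (cyclo α eps rho 0)).count 2 : ℤ) = lam := by
        rw [hcnt 2]
        exact aux_ite_val h2ne lam mu hlm
      have c2a : ((intDiff (cyclo α eps rho 0)).count (2 * α) : ℤ) = lam := by
        rw [hcnt (2 * α)]
        exact aux_ite_val h2ane lam mu hlm
      have hne : (intDiff (cyclo α eps rho 0)).count 2
          = (intDiff (cyclo α eps rho 0)).count (2 * α) := by
        have := c2.trans c2a.symm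
        exact_mod_cast this
      rw [hne, par2aC] at par2C
      exact absurd par2C (by decide)
    · -- (a)(ii)
      intro hfe lam mu hDP hlm
      obtain ⟨⟨-, -, -, hdisj⟩, -, hcnt⟩ := hDP
      have hf2 : 2 ∣ f := hfe.two_dvd
      have hDsym : ∀ i : Fin (e / eps), ∀ a ∈ cyclo α e f (eps * (i : ℕ)),
          -a ∈ cyclo α e f (eps * (i : ℕ)) :=
        fun i a ha => aux_neg_mem_cyclo hordef hepos hfpos hf2 _ ha
      have parU2 := aux_famInt_parity _ hDsym hdisj h2ne 2 h2ne
      rw [div_self h2ne, if_pos h1U] at parU2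
      have parU2a := aux_famInt_parity _ hDsym hdisj h2ne (2 * α) h2ane
      rw [mul_div_cancel_left₀ α h2ne, if_neg (fun h => hαC (hUsub h))] at parU2a
      have c2 : ((famInt (fun i : Fin (e / eps) => cyclo α e f (eps * (i : ℕ)))).count 2 : ℤ)
          = lam := by
        rw [hcnt 2]
        exact aux_ite_val h2ne lam mu hlm
      have c2a : ((famInt (fun i : Fin (e / eps) =>
          cyclo α e f (eps * (i : ℕ)))).count (2 * α) : ℤ) = lam := by
        rw [hcnt (2 * α)]
        exact aux_ite_val h2ane lam mu hlm
      have hne : (famInt (fun i : Fin (e / eps) => cyclo α e f (eps * (i : ℕ)))).count 2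
          = (famInt (fun i : Fin (e / eps) => cyclo α e f (eps * (i : ℕ)))).count (2 * α) := by
        have := c2.trans c2a.symm
        exact_mod_cast this
      rw [hne, parU2a] at parU2
      exact absurd parU2 (by decide)
    · -- (a)(iii)
      intro heps2 lam mu hP
      obtain ⟨-, -, hcnt⟩ := hP
      have hα2 := hα2C heps2
      have h2inC : (2 : F) ∈ cyclo α eps rho 0 := by
        by_contra h2C
        have c2 : ((intDiff (cyclo α eps rho 0)).count 2 : ℤ) = mu := by
          rw [hcnt 2, if_neg h2C, if_neg h2ne]
        by_cases hca : 2 * α ∈ cyclo α eps rho 0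
        · have hca2 : 2 * (α * α) ∉ cyclo α eps rho 0 := fun h => hmulC hca h
          have c2a2 : ((intDiff (cyclo α eps rho 0)).count (2 * (α * α)) : ℤ) = mu := by
            rw [hcnt (2 * (α * α)), if_neg hca2, if_neg h2aane]
          have par := aux_intDiff_parity (cyclo α eps rho 0) hCsym h2ne (2 * (α * α)) h2aane
          rw [mul_div_cancel_left₀ _ h2ne, if_neg hα2] at par
          have hne : (intDiff (cyclo α eps rho 0)).count 2
              = (intDiff (cyclo α eps rho 0)).count (2 * (α * α)) := by
            have := c2.trans c2a2.symm
            exact_mod_cast this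
          rw [hne, par] at par2C
          exact absurd par2C (by decide)
        · have c2a : ((intDiff (cyclo α eps rho 0)).count (2 * α) : ℤ) = mu := by
            rw [hcnt (2 * α), if_neg hca, if_neg h2ane]
          have hne : (intDiff (cyclo α eps rho 0)).count 2
              = (intDiff (cyclo α eps rho 0)).count (2 * α) := by
            have := c2.trans c2a.symm
            exact_mod_cast this
          rw [hne, par2aC] at par2C
          exact absurd par2C (by decide)
      exact ⟨h2inC, hneg2 h2inC⟩
    · -- (a)(iv)
      intro heps2 hfe lam mu hDP
      obtain ⟨⟨-, -, -, hdisj⟩, -, hcnt⟩ := hDP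
      have hα2 := hα2C heps2
      have hf2 : 2 ∣ f := hfe.two_dvd
      have hDsym : ∀ i : Fin (e / eps), ∀ a ∈ cyclo α e f (eps * (i : ℕ)),
          -a ∈ cyclo α e f (eps * (i : ℕ)) :=
        fun i a ha => aux_neg_mem_cyclo hordef hepos hfpos hf2 _ ha
      have parU2 := aux_famInt_parity _ hDsym hdisj h2ne 2 h2ne
      rw [div_self h2ne, if_pos h1U] at parU2
      have parU2a := aux_famInt_parity _ hDsym hdisj h2ne (2 * α) h2ane
      rw [mul_div_cancel_left₀ α h2ne, if_neg (fun h => hαC (hUsub h))] at parU2a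
      have h2inC : (2 : F) ∈ cyclo α eps rho 0 := by
        by_contra h2C
        have h2U : (2 : F) ∉ famU (fun i : Fin (e / eps) => cyclo α e f (eps * (i : ℕ))) :=
          fun h => h2C (hUsub h)
        have c2 : ((famInt (fun i : Fin (e / eps) => cyclo α e f (eps * (i : ℕ)))).count 2 : ℤ)
            = mu := by
          rw [hcnt 2, if_neg h2U, if_neg h2ne]
        by_cases hca : 2 * α ∈ famU (fun i : Fin (e / eps) => cyclo α e f (eps * (i : ℕ)))
        · have hca2 : 2 * (α * α) ∉ famU (fun i : Fin (e / eps) =>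
              cyclo α e f (eps * (i : ℕ))) :=
            fun h => hmulC (hUsub hca) (hUsub h)
          have c2a2 : ((famInt (fun i : Fin (e / eps) =>
              cyclo α e f (eps * (i : ℕ)))).count (2 * (α * α)) : ℤ) = mu := by
            rw [hcnt (2 * (α * α)), if_neg hca2, if_neg h2aane]
          have par := aux_famInt_parity _ hDsym hdisj h2ne (2 * (α * α)) h2aane
          rw [mul_div_cancel_left₀ _ h2ne,
            if_neg (fun h => hα2 (hUsub h))] at par
          have hne : (famInt (fun i : Fin (e / eps) => cyclo α e f (eps * (i : ℕ)))).count 2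
              = (famInt (fun i : Fin (e / eps) =>
                cyclo α e f (eps * (i : ℕ)))).count (2 * (α * α)) := by
            have := c2.trans c2a2.symm
            exact_mod_cast this
          rw [hne, par] at parU2
          exact absurd parU2 (by decide)
        · have c2a : ((famInt (fun i : Fin (e / eps) =>
              cyclo α e f (eps * (i : ℕ)))).count (2 * α) : ℤ) = mu := by
            rw [hcnt (2 * α), if_neg hca, if_neg h2ane]
          have hne : (famInt (fun i : Fin (e / eps) => cyclo α e f (eps * (i : ℕ)))).count 2
              = (famInt (fun i : Fin (e / eps) =>
                cyclo α e f (eps * (i : ℕ)))).count (2 * α) := by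
            have := c2.trans c2a.symm
            exact_mod_cast this
          rw [hne, parU2a] at parU2
          exact absurd parU2 (by decide)
      exact ⟨h2inC, hneg2 h2inC⟩
  · -- part (b)
    intro hmod hepsE
    have hdm := Nat.div_add_mod q (2 * eps)
    have hkey : eps * rho = 2 * eps * (q / (2 * eps)) + eps := by omega
    have hrhoodd : rho % 2 = 1 := by
      have h' : eps * rho = eps * (2 * (q / (2 * eps)) + 1) := by rw [hkey]; ring
      have := Nat.eq_of_mul_eq_mul_left hepspos h'
      omega
    have h2eps : 2 ∣ eps := hepsE.two_dvd
    have hm2 : 2 ∣ eps * rho := Dvd.dvd.mul_right h2eps rho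
    have hneg1 : (-1 : F) ≠ 1 := (aux_pow_half hordeps hm2 (by positivity)).2
    have hm1C : (-1 : F) ∉ cyclo α eps rho 0 := by
      rw [hmemC]
      intro h
      rw [Odd.neg_one_pow (Nat.odd_iff.mpr hrhoodd)] at h
      exact hneg1 h
    have hm1ne : (-1 : F) ≠ 0 := neg_ne_zero.mpr one_ne_zero
    refine ⟨?_, ?_⟩
    · -- (b)(i)
      intro lam mu hP
      obtain ⟨-, -, hcnt⟩ := hP
      have c1 : ((intDiff (cyclo α eps rho 0)).count 1 : ℤ) = lam := by
        rw [hcnt 1, if_pos h1C]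
      have cm1 : ((intDiff (cyclo α eps rho 0)).count (-1) : ℤ) = mu := by
        rw [hcnt (-1), if_neg hm1C, if_neg hm1ne]
      have hsym : ((intDiff (cyclo α eps rho 0)).count (-1) : ℤ)
          = ((intDiff (cyclo α eps rho 0)).count 1 : ℤ) := by
        exact_mod_cast congrArg Nat.cast (aux_intDiff_count_neg (cyclo α eps rho 0) 1)
      omega
    · -- (b)(ii)
      intro hlt lam mu hDP
      obtain ⟨-, -, hcnt⟩ := hDP
      have c1 : ((famInt (fun i : Fin (e / eps) => cyclo α e f (eps * (i : ℕ)))).count 1 : ℤ)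
          = lam := by
        rw [hcnt 1, if_pos h1U]
      have cm1 : ((famInt (fun i : Fin (e / eps) =>
          cyclo α e f (eps * (i : ℕ)))).count (-1) : ℤ) = mu := by
        rw [hcnt (-1), if_neg (fun h => hm1C (hUsub h)), if_neg hm1ne]
      have hsym : ((famInt (fun i : Fin (e / eps) =>
            cyclo α e f (eps * (i : ℕ)))).count (-1) : ℤ)
          = ((famInt (fun i : Fin (e / eps) => cyclo α e f (eps * (i : ℕ)))).count 1 : ℤ) := by
        exact_mod_cast congrArg Nat.cast
          (aux_famInt_count_neg (fun i : Fin (e / eps) => cyclo α e f (eps * (i : ℕ))) 1)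
      omega
end
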